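/- arXiv:2410.13767 — 4 statements merged into one kernel-verified Lean document; each statement's English description precedes it below -/
import Mathlib

section
/- Suppose V(s) ≥ 1 for all s and the drift condition Σ_{s'} P̃η(s,s') V(s') ≤ b V(s) + d·1_C(s) holds for all s ∈ S, where b ∈ (0,1), d ≥ 0, and C ⊆ S (with 1_C the indicator of C). Then the V-norm of the kernel difference satisfies ‖P̃θ − P̃η‖_V := sup_s (1/V(s)) Σ_{s'} |P̃θ(s,s') − P̃η(s,s')| V(s') ≤ ‖r−1‖∞ · (b + d). -/
open scoped BigOperators ENNReal

/-- Under the drift condition `∑ s', P̃η(s,s') V s' ≤ b V s + d·1_C s` with `b ∈ (0,1)`,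
`d ≥ 0` and `V ≥ 1`, the `V`-norm of the day-kernel difference satisfies
`‖P̃θ − P̃η‖_V ≤ ‖r − 1‖_∞ · (b + d)`, where `r(f|s) = πθ(f|s)/πη(f|s)` and
`‖r − 1‖_∞ = sup_s ∑_{f ∈ A s} |r(f|s) − 1|` (the sups are evaluated in `ℝ≥0∞`). -/
theorem stmt_6 {S F : Type*} [Countable S]
    (A : S → Finset F) (hA : ∀ s, (A s).Nonempty)
    (πθ πη : S → F → ℝ)
    (hπθ0 : ∀ s, ∀ f ∈ A s, 0 ≤ πθ s f) (hπθ1 : ∀ s, ∑ f ∈ A s, πθ s f = 1)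
    (hπη0 : ∀ s, ∀ f ∈ A s, 0 < πη s f) (hπη1 : ∀ s, ∑ f ∈ A s, πη s f = 1)
    (r : S → F → ℝ) (hr : ∀ s f, r s f = πθ s f / πη s f)
    (p : S → F → S → ℝ) (hp0 : ∀ s f s', 0 ≤ p s f s') (hp1 : ∀ s f, ∑' s', p s f s' = 1)
    (Pθ Pη : S → S → ℝ)
    (hPθ : ∀ s s', Pθ s s' = ∑ f ∈ A s, πθ s f * p s f s')
    (hPη : ∀ s s', Pη s s' = ∑ f ∈ A s, πη s f * p s f s')
    (V : S → ℝ) (hV : ∀ s, 1 ≤ V s)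
    (b d : ℝ) (hb0 : 0 < b) (hb1 : b < 1) (hd : 0 ≤ d) (C : Set S)
    (hdriftSummable : ∀ s, Summable fun s' => Pη s s' * V s')
    (hdrift : ∀ s, ∑' s', Pη s s' * V s' ≤ b * V s + d * C.indicator (fun _ => (1 : ℝ)) s) :
    (⨆ s, ∑' s', ENNReal.ofReal (|Pθ s s' - Pη s s'| * V s' / V s))
      ≤ (⨆ s, ENNReal.ofReal (∑ f ∈ A s, |r s f - 1|)) * ENNReal.ofReal (b + d) := by
  refine iSup_le fun s => ?_
  have hVs : (0:ℝ) < V s := lt_of_lt_of_le one_pos (hV s)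
  have hV0 : ∀ t, (0:ℝ) ≤ V t := fun t => le_trans zero_le_one (hV t)
  set M : ℝ := ∑ f ∈ A s, |r s f - 1| with hM
  have hM0 : 0 ≤ M := Finset.sum_nonneg fun f _ => abs_nonneg _
  -- summability of p(s,f,·)·V for each action
  have hsumPf : ∀ f ∈ A s, Summable fun s' => p s f s' * V s' := by
    intro f hf
    have hpos := hπη0 s f hf
    have h1 : Summable fun s' => πη s f * (p s f s' * V s') := by
      refine Summable.of_nonneg_of_le (fun s' => ?_) (fun s' => ?_) (hdriftSummable s)
      · exact mul_nonneg hpos.le (mul_nonneg (hp0 s f s') (hV0 s'))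
      · rw [hPη, Finset.sum_mul]
        have := Finset.single_le_sum
          (f := fun g => πη s g * p s g s' * V s')
          (fun g hg => mul_nonneg (mul_nonneg (hπη0 s g hg).le (hp0 s g s')) (hV0 s')) hf
        simpa only [mul_assoc] using this
    exact (summable_mul_left_iff (ne_of_gt hpos)).mp h1
  -- pointwise bound
  have hpw : ∀ s', |Pθ s s' - Pη s s'| * V s'
      ≤ ∑ f ∈ A s, |r s f - 1| * πη s f * (p s f s' * V s') := by
    intro s'
    have habs : ∀ f ∈ A s, |πθ s f - πη s f| = |r s f - 1| * πη s f := by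
      intro f hf
      have hpos := hπη0 s f hf
      rw [hr, div_sub_one (ne_of_gt hpos), abs_div, abs_of_pos hpos,
        div_mul_cancel₀ _ (ne_of_gt hpos)]
    calc |Pθ s s' - Pη s s'| * V s'
        = |∑ f ∈ A s, (πθ s f - πη s f) * p s f s'| * V s' := by
          rw [hPθ, hPη, ← Finset.sum_sub_distrib]
          simp only [sub_mul]
      _ ≤ (∑ f ∈ A s, |(πθ s f - πη s f) * p s f s'|) * V s' := by
          exact mul_le_mul_of_nonneg_right (Finset.abs_sum_le_sum_abs _ _) (hV0 s')
      _ = ∑ f ∈ A s, |r s f - 1| * πη s f * (p s f s' * V s') := by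
          rw [Finset.sum_mul]
          refine Finset.sum_congr rfl fun f hf => ?_
          rw [abs_mul, abs_of_nonneg (hp0 s f s'), habs f hf]
          ring
  have hsumG : ∀ f ∈ A s, Summable fun s' => |r s f - 1| * πη s f * (p s f s' * V s') :=
    fun f hf => (hsumPf f hf).mul_left _
  have hsumSum : Summable fun s' => ∑ f ∈ A s, |r s f - 1| * πη s f * (p s f s' * V s') :=
    summable_sum hsumG
  have hsumLHS : Summable fun s' => |Pθ s s' - Pη s s'| * V s' :=
    Summable.of_nonneg_of_le (fun s' => mul_nonneg (abs_nonneg _) (hV0 s')) hpw hsumSum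
  have hTnn : ∀ f, 0 ≤ ∑' s', p s f s' * V s' :=
    fun f => tsum_nonneg fun s' => mul_nonneg (hp0 s f s') (hV0 s')
  -- sum of η-weighted tails equals the drift sum
  have hPηtsum : ∑ f ∈ A s, πη s f * ∑' s', p s f s' * V s' = ∑' s', Pη s s' * V s' := by
    have : ∀ s', Pη s s' * V s' = ∑ f ∈ A s, πη s f * (p s f s' * V s') := by
      intro s'
      rw [hPη, Finset.sum_mul]
      exact Finset.sum_congr rfl fun f _ => by ring
    rw [tsum_congr this, Summable.tsum_finsetSum (fun f hf => (hsumPf f hf).mul_left _)]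
    exact Finset.sum_congr rfl fun f hf => (tsum_mul_left).symm
  -- key real inequality
  have hkey : ∑' s', |Pθ s s' - Pη s s'| * V s' ≤ M * ((b + d) * V s) := by
    calc ∑' s', |Pθ s s' - Pη s s'| * V s'
        ≤ ∑' s', ∑ f ∈ A s, |r s f - 1| * πη s f * (p s f s' * V s') :=
          Summable.tsum_le_tsum hpw hsumLHS hsumSum
      _ = ∑ f ∈ A s, ∑' s', |r s f - 1| * πη s f * (p s f s' * V s') := Summable.tsum_finsetSum hsumG
      _ = ∑ f ∈ A s, |r s f - 1| * (πη s f * ∑' s', p s f s' * V s') := by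
          refine Finset.sum_congr rfl fun f hf => ?_
          rw [← mul_assoc, ← tsum_mul_left]
      _ ≤ ∑ f ∈ A s, M * (πη s f * ∑' s', p s f s' * V s') := by
          refine Finset.sum_le_sum fun f hf => ?_
          refine mul_le_mul_of_nonneg_right ?_
            (mul_nonneg (hπη0 s f hf).le (hTnn f))
          exact Finset.single_le_sum (f := fun g => |r s g - 1|) (fun g _ => abs_nonneg _) hf
      _ = M * ∑' s', Pη s s' * V s' := by rw [← Finset.mul_sum, hPηtsum]
      _ ≤ M * ((b + d) * V s) := by
          refine mul_le_mul_of_nonneg_left ?_ hM0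
          refine le_trans (hdrift s) ?_
          have hind : C.indicator (fun _ => (1:ℝ)) s ≤ 1 := by
            by_cases h : s ∈ C <;> simp [Set.indicator, h]
          have hind0 : 0 ≤ C.indicator (fun _ => (1:ℝ)) s := by
            by_cases h : s ∈ C <;> simp [Set.indicator, h]
          nlinarith [hV s, hd]
  have hsumDiv : Summable fun s' => |Pθ s s' - Pη s s'| * V s' / V s :=
    hsumLHS.div_const _
  have hreal : ∑' s', |Pθ s s' - Pη s s'| * V s' / V s ≤ M * (b + d) := by
    rw [tsum_div_const, div_le_iff₀ hVs]
    calc ∑' s', |Pθ s s' - Pη s s'| * V s' ≤ M * ((b + d) * V s) := hkey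
      _ = M * (b + d) * V s := by ring
  calc (∑' s', ENNReal.ofReal (|Pθ s s' - Pη s s'| * V s' / V s))
      = ENNReal.ofReal (∑' s', |Pθ s s' - Pη s s'| * V s' / V s) := by
        rw [ENNReal.ofReal_tsum_of_nonneg
          (fun s' => div_nonneg (mul_nonneg (abs_nonneg _) (hV0 s')) hVs.le) hsumDiv]
    _ ≤ ENNReal.ofReal (M * (b + d)) := ENNReal.ofReal_le_ofReal hreal
    _ = ENNReal.ofReal M * ENNReal.ofReal (b + d) := ENNReal.ofReal_mul hM0
    _ ≤ (⨆ s, ENNReal.ofReal (∑ f ∈ A s, |r s f - 1|)) * ENNReal.ofReal (b + d) :=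
        mul_le_mul_left (le_iSup (fun s => ENNReal.ofReal (∑ f ∈ A s, |r s f - 1|)) s) _
end

section
/- The objective N̂₁ is differentiable on ℝ³ and its partial derivatives satisfy ∂N̂₁/∂θ₀(θ) = ∇₀(θ) and ∂N̂₁/∂θ_k(θ) = ∇₀(θ)·x_k for k = 1, 2, where ∇₀(θ) = Σ_{f=0}^q binom(q,f) p^f (1−p)^{q−f} (f − qp) Â(f) = q p (1−p) (2 β̂₃ (1−μ)² (2(q−1)p + x₂ − x₁ + 1) + B − C), with p = p(θ). (Lemma 2: closed-form policy gradient for the symmetric two-pool midnight MDP under the logistic randomized atomic policy.) -/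
open scoped BigOperators

private lemma aux_pow (n : ℕ) (s : ℝ) : (n:ℝ) * s^(n-1) * s = n * s^n := by
  cases n with
  | zero => simp
  | succ m => push_cast [Nat.succ_sub_one, pow_succ]; ring

private lemma binom_expand (q : ℕ) (p t : ℝ) :
    (p*t + (1-p))^q = ∑ f ∈ Finset.range (q+1),
      (q.choose f : ℝ) * p^f * (1-p)^(q-f) * t^f := by
  rw [add_pow]
  refine Finset.sum_congr rfl fun f _ => ?_
  rw [mul_pow]; ring

private lemma deriv1 (q : ℕ) (p t : ℝ) :
    (q:ℝ) * (p*t+(1-p))^(q-1) * p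
      = ∑ f ∈ Finset.range (q+1),
        (q.choose f:ℝ) * p^f * (1-p)^(q-f) * ((f:ℝ) * t^(f-1)) := by
  have h0 : HasDerivAt (fun s:ℝ => p*s+(1-p)) p t := by
    simpa using ((hasDerivAt_id t).const_mul p).add_const (1-p)
  have hL : HasDerivAt (fun s:ℝ => (p*s+(1-p))^q) ((q:ℝ)*(p*t+(1-p))^(q-1)*p) t := h0.pow q
  have hR : HasDerivAt (fun s:ℝ => (p*s+(1-p))^q)
      (∑ f ∈ Finset.range (q+1), (q.choose f:ℝ)*p^f*(1-p)^(q-f) * ((f:ℝ)*t^(f-1))) t := by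
    have he : (fun s:ℝ => (p*s+(1-p))^q)
        = fun s => ∑ f ∈ Finset.range (q+1), (q.choose f:ℝ)*p^f*(1-p)^(q-f)*s^f :=
      funext fun s => binom_expand q p s
    rw [he]
    exact HasDerivAt.fun_sum fun f _ => (hasDerivAt_pow f t).const_mul _
  exact hL.unique hR

private lemma deriv2 (q : ℕ) (p t : ℝ) :
    (q:ℝ) * (((q-1:ℕ):ℝ) * (p*t+(1-p))^(q-1-1) * p) * p
      = ∑ f ∈ Finset.range (q+1),
        (q.choose f:ℝ) * p^f * (1-p)^(q-f) * ((f:ℝ) * (((f-1:ℕ):ℝ) * t^(f-1-1))) := by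
  have h0 : HasDerivAt (fun s:ℝ => p*s+(1-p)) p t := by
    simpa using ((hasDerivAt_id t).const_mul p).add_const (1-p)
  have hL : HasDerivAt (fun s:ℝ => (q:ℝ)*(p*s+(1-p))^(q-1)*p)
      ((q:ℝ) * (((q-1:ℕ):ℝ) * (p*t+(1-p))^(q-1-1) * p) * p) t :=
    ((h0.pow (q-1)).const_mul (q:ℝ)).mul_const p
  have hR : HasDerivAt (fun s:ℝ => (q:ℝ)*(p*s+(1-p))^(q-1)*p)
      (∑ f ∈ Finset.range (q+1),
        (q.choose f:ℝ)*p^f*(1-p)^(q-f) * ((f:ℝ) * (((f-1:ℕ):ℝ)*t^(f-1-1)))) t := by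
    have he : (fun s:ℝ => (q:ℝ)*(p*s+(1-p))^(q-1)*p)
        = fun s => ∑ f ∈ Finset.range (q+1),
            (q.choose f:ℝ)*p^f*(1-p)^(q-f) * ((f:ℝ)*s^(f-1)) :=
      funext fun s => deriv1 q p s
    rw [he]
    exact HasDerivAt.fun_sum fun f _ =>
      (((hasDerivAt_pow (f-1) t).const_mul (f:ℝ)).const_mul _)
  exact hL.unique hR

private lemma deriv3 (q : ℕ) (p t : ℝ) :
    (q:ℝ) * (((q-1:ℕ):ℝ) * (((q-1-1:ℕ):ℝ) * (p*t+(1-p))^(q-1-1-1) * p) * p) * p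
      = ∑ f ∈ Finset.range (q+1),
        (q.choose f:ℝ) * p^f * (1-p)^(q-f)
          * ((f:ℝ) * (((f-1:ℕ):ℝ) * (((f-1-1:ℕ):ℝ) * t^(f-1-1-1)))) := by
  have h0 : HasDerivAt (fun s:ℝ => p*s+(1-p)) p t := by
    simpa using ((hasDerivAt_id t).const_mul p).add_const (1-p)
  have hL : HasDerivAt (fun s:ℝ => (q:ℝ)*(((q-1:ℕ):ℝ)*(p*s+(1-p))^(q-1-1)*p)*p)
      ((q:ℝ) * (((q-1:ℕ):ℝ) * (((q-1-1:ℕ):ℝ) * (p*t+(1-p))^(q-1-1-1) * p) * p) * p) t :=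
    ((((h0.pow (q-1-1)).const_mul ((q-1:ℕ):ℝ)).mul_const p).const_mul (q:ℝ)).mul_const p
  have hR : HasDerivAt (fun s:ℝ => (q:ℝ)*(((q-1:ℕ):ℝ)*(p*s+(1-p))^(q-1-1)*p)*p)
      (∑ f ∈ Finset.range (q+1),
        (q.choose f:ℝ)*p^f*(1-p)^(q-f)
          * ((f:ℝ) * (((f-1:ℕ):ℝ) * (((f-1-1:ℕ):ℝ)*t^(f-1-1-1))))) t := by
    have he : (fun s:ℝ => (q:ℝ)*(((q-1:ℕ):ℝ)*(p*s+(1-p))^(q-1-1)*p)*p)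
        = fun s => ∑ f ∈ Finset.range (q+1),
            (q.choose f:ℝ)*p^f*(1-p)^(q-f) * ((f:ℝ)*(((f-1:ℕ):ℝ)*s^(f-1-1))) :=
      funext fun s => deriv2 q p s
    rw [he]
    exact HasDerivAt.fun_sum fun f _ =>
      ((((hasDerivAt_pow (f-1-1) t).const_mul ((f-1:ℕ):ℝ)).const_mul (f:ℝ)).const_mul _)
  exact hL.unique hR

private lemma mom0 (q : ℕ) (p : ℝ) :
    ∑ f ∈ Finset.range (q+1), (q.choose f:ℝ) * p^f * (1-p)^(q-f) = 1 := by
  have h := binom_expand q p 1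
  simp only [mul_one, one_pow] at h
  rw [show p+(1-p) = (1:ℝ) by ring, one_pow] at h
  exact h.symm

private lemma mom1 (q : ℕ) (p : ℝ) :
    ∑ f ∈ Finset.range (q+1), (q.choose f:ℝ) * p^f * (1-p)^(q-f) * (f:ℝ)
      = (q:ℝ) * p := by
  have := deriv1 q p 1
  simp only [mul_one, one_pow] at this
  rw [show p+(1-p) = (1:ℝ) by ring] at this
  simp only [one_pow] at this
  rw [← this]; ring

private lemma mom2 (q : ℕ) (p : ℝ) :
    ∑ f ∈ Finset.range (q+1),
        (q.choose f:ℝ) * p^f * (1-p)^(q-f) * ((f:ℝ) * ((f-1:ℕ):ℝ))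
      = (q:ℝ) * ((q-1:ℕ):ℝ) * p^2 := by
  have := deriv2 q p 1
  simp only [mul_one, one_pow] at this
  rw [show p+(1-p) = (1:ℝ) by ring] at this
  simp only [one_pow, mul_one] at this
  rw [← this]; ring

private lemma mom3 (q : ℕ) (p : ℝ) :
    ∑ f ∈ Finset.range (q+1),
        (q.choose f:ℝ) * p^f * (1-p)^(q-f) * ((f:ℝ) * (((f-1:ℕ):ℝ) * ((f-1-1:ℕ):ℝ)))
      = (q:ℝ) * ((q-1:ℕ):ℝ) * ((q-1-1:ℕ):ℝ) * p^3 := by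
  have := deriv3 q p 1
  simp only [mul_one, one_pow] at this
  rw [show p+(1-p) = (1:ℝ) by ring] at this
  simp only [one_pow, mul_one] at this
  rw [← this]; ring

private lemma cast2' (q : ℕ) (hq : 1 ≤ q) : ((q-1:ℕ):ℝ) = (q:ℝ) - 1 :=
  Nat.cast_pred hq

private lemma cast3' (q : ℕ) (hq : 1 ≤ q) :
    (q:ℝ) * ((q-1:ℕ):ℝ) * ((q-1-1:ℕ):ℝ) = (q:ℝ)*((q:ℝ)-1)*((q:ℝ)-2) := by
  match q, hq with
  | 1, _ => norm_num
  | (n+2), _ =>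
    push_cast [show n+2-1 = n+1 from rfl, show n+1-1 = n from rfl]; ring

private lemma hsq' (f : ℕ) : ((f:ℝ) * ((f-1:ℕ):ℝ)) = (f:ℝ)^2 - f := by
  cases f with
  | zero => simp
  | succ m => push_cast [Nat.succ_sub_one]; ring

private lemma hcube' (f : ℕ) :
    ((f:ℝ) * (((f-1:ℕ):ℝ) * ((f-1-1:ℕ):ℝ))) = (f:ℝ)^3 - 3*(f:ℝ)^2 + 2*f := by
  match f with
  | 0 => simp
  | 1 => norm_num
  | (n+2) =>
    push_cast [show n+2-1 = n+1 from rfl, show n+1-1 = n from rfl]; ring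

private lemma logistic_deriv (z : ℝ → ℝ) (t m : ℝ) (hz : HasDerivAt z m t) :
    HasDerivAt (fun s => 1 - 1/(1 + Real.exp (z s)))
      ((1 - 1/(1+Real.exp (z t))) * (1 - (1 - 1/(1+Real.exp (z t)))) * m) t := by
  have hpos : (0:ℝ) < 1 + Real.exp (z t) := by positivity
  have hne : (1:ℝ) + Real.exp (z t) ≠ 0 := ne_of_gt hpos
  have h1 : HasDerivAt (fun s => 1 + Real.exp (z s)) (Real.exp (z t) * m) t :=
    (hz.exp).const_add 1
  have h2 := h1.inv hne
  have h3 := h2.const_sub (1:ℝ)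
  have he : (fun s => 1 - 1/(1 + Real.exp (z s))) = fun s => 1 - (1 + Real.exp (z s))⁻¹ := by
    funext s; rw [one_div]
  rw [he]
  refine h3.congr_deriv ?_
  have hE : 1 - 1/(1+Real.exp (z t)) = Real.exp (z t) / (1 + Real.exp (z t)) := by
    field_simp
    ring
  rw [hE]
  rw [neg_div, neg_neg]
  field_simp
  ring

private lemma main_deriv (q : ℕ) (Adv : ℕ → ℝ) (u : ℝ → ℝ) (t m : ℝ)
    (hu : HasDerivAt u (u t * (1 - u t) * m) t) :
    HasDerivAt (fun s => ∑ f ∈ Finset.range (q+1),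
        (q.choose f:ℝ) * u s ^ f * (1 - u s)^(q-f) * Adv f)
      ((∑ f ∈ Finset.range (q+1),
        (q.choose f:ℝ) * u t ^ f * (1 - u t)^(q-f) * ((f:ℝ) - q * u t) * Adv f) * m) t := by
  rw [Finset.sum_mul]
  apply HasDerivAt.fun_sum
  intro f hf
  have hfq : f ≤ q := by have := Finset.mem_range.mp hf; omega
  have h1 : HasDerivAt (fun s => u s ^ f)
      ((f:ℝ) * u t ^ (f-1) * (u t * (1-u t) * m)) t := hu.pow f
  have h2 : HasDerivAt (fun s => (1 - u s)^(q-f))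
      (((q-f:ℕ):ℝ) * (1-u t)^(q-f-1) * (-(u t*(1-u t)*m))) t := by
    have := ((hasDerivAt_const t (1:ℝ)).sub hu).pow (q-f)
    exact this.congr_deriv (by simp only [Pi.sub_apply]; ring)
  have h3 := ((h1.const_mul ((q.choose f:ℝ))).mul h2).mul_const (Adv f)
  refine h3.congr_deriv (Eq.symm ?_)
  have e1 := aux_pow f (u t)
  have e2 := aux_pow (q-f) (1 - u t)
  have e3 : ((q-f:ℕ):ℝ) = (q:ℝ) - f := Nat.cast_sub hfq
  rw [e3] at e2
  rw [e3]
  set s := u t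
  linear_combination (-((q.choose f:ℝ) * Adv f * m * (1-s) * (1-s)^(q-f))) * e1
    + ((q.choose f:ℝ) * Adv f * m * s^f * s) * e2

/-- **Lemma 2 (closed-form policy gradient).** In the symmetric two-pool midnight MDP with
the logistic randomized atomic policy `p(θ) = 1 − 1/(1 + exp(θ₁x₁ + θ₂x₂ + θ₀))`, the
state-restricted PPO surrogate objective
`N̂₁(θ) = ∑_{f=0}^q binom(q,f) p(θ)^f (1−p(θ))^{q−f} Â(f)` is differentiable on `ℝ³`, its
partial derivatives satisfy `∂N̂₁/∂θ₀ = ∇₀(θ)` and `∂N̂₁/∂θ_k = ∇₀(θ)·x_k` for `k = 1,2`,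
and `∇₀(θ) = ∑_f binom(q,f) p^f (1−p)^{q−f} (f − qp) Â(f)
  = q p (1−p) (2 β̂₃ (1−μ)² (2(q−1)p + x₂ − x₁ + 1) + B − C)`. -/
theorem stmt_11 (q : ℕ) (hq : 1 ≤ q) (x₁ x₂ B C β₃ c μ : ℝ)
    (hμ0 : 0 ≤ μ) (hμ1 : μ < 1)
    (p : ℝ × ℝ × ℝ → ℝ)
    (hp : ∀ θ : ℝ × ℝ × ℝ,
      p θ = 1 - 1 / (1 + Real.exp (θ.2.1 * x₁ + θ.2.2 * x₂ + θ.1)))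
    (Adv : ℕ → ℝ)
    (hAdv : ∀ f : ℕ, Adv f = (B - C) * f +
      β₃ * (1 - μ) ^ 2 * (2 * (f : ℝ) ^ 2 - 2 * (x₁ - x₂) * f) + c)
    (N₁ : ℝ × ℝ × ℝ → ℝ)
    (hN₁ : ∀ θ, N₁ θ = ∑ f ∈ Finset.range (q + 1),
      (q.choose f : ℝ) * p θ ^ f * (1 - p θ) ^ (q - f) * Adv f)
    (grad₀ : ℝ × ℝ × ℝ → ℝ)
    (hgrad₀ : ∀ θ, grad₀ θ = ∑ f ∈ Finset.range (q + 1),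
      (q.choose f : ℝ) * p θ ^ f * (1 - p θ) ^ (q - f) * ((f : ℝ) - q * p θ) * Adv f) :
    Differentiable ℝ N₁
    ∧ (∀ θ, grad₀ θ = q * p θ * (1 - p θ) *
        (2 * β₃ * (1 - μ) ^ 2 * (2 * ((q : ℝ) - 1) * p θ + x₂ - x₁ + 1) + B - C))
    ∧ (∀ θ₀ θ₁ θ₂ : ℝ,
        HasDerivAt (fun t => N₁ (t, θ₁, θ₂)) (grad₀ (θ₀, θ₁, θ₂)) θ₀
        ∧ HasDerivAt (fun t => N₁ (θ₀, t, θ₂)) (grad₀ (θ₀, θ₁, θ₂) * x₁) θ₁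
        ∧ HasDerivAt (fun t => N₁ (θ₀, θ₁, t)) (grad₀ (θ₀, θ₁, θ₂) * x₂) θ₂) := by
  -- differentiability of p
  have hpd : Differentiable ℝ p := by
    rw [show p = fun θ : ℝ×ℝ×ℝ => 1 - 1/(1+Real.exp (θ.2.1*x₁+θ.2.2*x₂+θ.1))
      from funext hp]
    have hz : Differentiable ℝ (fun θ:ℝ×ℝ×ℝ => θ.2.1*x₁+θ.2.2*x₂+θ.1) :=
      ((differentiable_snd.fst.mul_const x₁).add
        (differentiable_snd.snd.mul_const x₂)).add differentiable_fst
    have he : Differentiable ℝ (fun θ:ℝ×ℝ×ℝ => 1 + Real.exp (θ.2.1*x₁+θ.2.2*x₂+θ.1)) :=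
      (Real.differentiable_exp.comp hz).const_add 1
    have hne : ∀ θ:ℝ×ℝ×ℝ, 1 + Real.exp (θ.2.1*x₁+θ.2.2*x₂+θ.1) ≠ 0 := fun θ => by positivity
    simp only [one_div]
    exact (differentiable_const 1).sub (he.inv hne)
  refine ⟨?_, ?_, ?_⟩
  · -- differentiability of N₁
    rw [show N₁ = fun θ => ∑ f ∈ Finset.range (q+1),
        (q.choose f : ℝ) * p θ ^ f * (1 - p θ) ^ (q - f) * Adv f from funext hN₁]
    apply Differentiable.fun_sum
    intro f _
    exact (((hpd.pow f).const_mul _).mul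
      (((differentiable_const 1).sub hpd).pow (q-f))).mul_const (Adv f)
  · -- closed form for grad₀
    intro θ
    set P := p θ with hPdef
    have hT0 := mom0 q P
    have hT1 := mom1 q P
    have hT2 : ∑ f ∈ Finset.range (q+1),
        (q.choose f:ℝ) * P^f * (1-P)^(q-f) * (f:ℝ)^2
        = (q:ℝ)*((q:ℝ)-1)*P^2 + (q:ℝ)*P := by
      have h2 := mom2 q P
      have hre : ∑ f ∈ Finset.range (q+1),
          (q.choose f:ℝ) * P^f * (1-P)^(q-f) * (f:ℝ)^2
          = ∑ f ∈ Finset.range (q+1),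
            ((q.choose f:ℝ) * P^f * (1-P)^(q-f) * ((f:ℝ) * ((f-1:ℕ):ℝ))
              + (q.choose f:ℝ) * P^f * (1-P)^(q-f) * (f:ℝ)) :=
        Finset.sum_congr rfl fun f _ => by rw [hsq' f]; ring
      rw [hre, Finset.sum_add_distrib, h2, hT1, cast2' q hq]
    have hT3 : ∑ f ∈ Finset.range (q+1),
        (q.choose f:ℝ) * P^f * (1-P)^(q-f) * (f:ℝ)^3
        = (q:ℝ)*((q:ℝ)-1)*((q:ℝ)-2)*P^3 + 3*((q:ℝ)*((q:ℝ)-1)*P^2) + (q:ℝ)*P := by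
      have h3 := mom3 q P
      have h2 := mom2 q P
      have hre : ∑ f ∈ Finset.range (q+1),
          (q.choose f:ℝ) * P^f * (1-P)^(q-f) * (f:ℝ)^3
          = ∑ f ∈ Finset.range (q+1),
            ((q.choose f:ℝ) * P^f * (1-P)^(q-f) * ((f:ℝ) * (((f-1:ℕ):ℝ) * ((f-1-1:ℕ):ℝ)))
              + 3 * ((q.choose f:ℝ) * P^f * (1-P)^(q-f) * ((f:ℝ) * ((f-1:ℕ):ℝ)))
              + (q.choose f:ℝ) * P^f * (1-P)^(q-f) * (f:ℝ)) :=
        Finset.sum_congr rfl fun f _ => by rw [hcube' f, hsq' f]; ring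
      rw [hre, Finset.sum_add_distrib, Finset.sum_add_distrib, ← Finset.mul_sum,
        h3, h2, hT1, cast3' q hq, cast2' q hq]
    rw [hgrad₀ θ]
    have hre : ∑ f ∈ Finset.range (q+1),
        (q.choose f : ℝ) * P ^ f * (1 - P) ^ (q - f) * ((f : ℝ) - q * P) * Adv f
        = ∑ f ∈ Finset.range (q+1),
          ((2*(β₃*(1-μ)^2)) * ((q.choose f:ℝ) * P^f * (1-P)^(q-f) * (f:ℝ)^3)
            + ((B-C) - 2*(β₃*(1-μ)^2)*(x₁-x₂) - 2*(β₃*(1-μ)^2)*((q:ℝ)*P))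
              * ((q.choose f:ℝ) * P^f * (1-P)^(q-f) * (f:ℝ)^2)
            + (c - ((B-C) - 2*(β₃*(1-μ)^2)*(x₁-x₂))*((q:ℝ)*P))
              * ((q.choose f:ℝ) * P^f * (1-P)^(q-f) * (f:ℝ))
            + (-(c*((q:ℝ)*P))) * ((q.choose f:ℝ) * P^f * (1-P)^(q-f))) :=
      Finset.sum_congr rfl fun f _ => by rw [hAdv f]; ring
    rw [hre, Finset.sum_add_distrib, Finset.sum_add_distrib, Finset.sum_add_distrib,
      ← Finset.mul_sum, ← Finset.mul_sum, ← Finset.mul_sum, ← Finset.mul_sum,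
      hT3, hT2, hT1, hT0]
    ring
  · -- directional derivatives
    intro θ₀ θ₁ θ₂
    refine ⟨?_, ?_, ?_⟩
    · have hz : HasDerivAt (fun s:ℝ => θ₁*x₁+θ₂*x₂+s) 1 θ₀ :=
        (hasDerivAt_id θ₀).const_add (θ₁*x₁+θ₂*x₂)
      have hu := logistic_deriv (fun s:ℝ => θ₁*x₁+θ₂*x₂+s) θ₀ 1 hz
      have H := main_deriv q Adv
        (fun s => 1 - 1/(1+Real.exp (θ₁*x₁+θ₂*x₂+s))) θ₀ 1 hu
      have hfun : (fun t => N₁ (t,θ₁,θ₂))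
          = (fun s => ∑ f ∈ Finset.range (q+1),
              (q.choose f:ℝ) * (1 - 1/(1+Real.exp (θ₁*x₁+θ₂*x₂+s)))^f
                * (1 - (1 - 1/(1+Real.exp (θ₁*x₁+θ₂*x₂+s))))^(q-f) * Adv f) := by
        funext t
        rw [hN₁]
        exact Finset.sum_congr rfl fun f _ => by rw [hp (t,θ₁,θ₂)]
      have hval : grad₀ (θ₀,θ₁,θ₂)
          = (∑ f ∈ Finset.range (q+1),
              (q.choose f:ℝ) * (1 - 1/(1+Real.exp (θ₁*x₁+θ₂*x₂+θ₀)))^f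
                * (1 - (1 - 1/(1+Real.exp (θ₁*x₁+θ₂*x₂+θ₀))))^(q-f)
                * ((f:ℝ) - q * (1 - 1/(1+Real.exp (θ₁*x₁+θ₂*x₂+θ₀)))) * Adv f) * 1 := by
        rw [mul_one, hgrad₀]
        exact Finset.sum_congr rfl fun f _ => by rw [hp (θ₀,θ₁,θ₂)]
      rw [hfun, hval]
      exact H
    · have hz : HasDerivAt (fun s:ℝ => s*x₁+θ₂*x₂+θ₀) x₁ θ₁ := by
        simpa using (((hasDerivAt_id θ₁).mul_const x₁).add_const (θ₂*x₂)).add_const θ₀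
      have hu := logistic_deriv (fun s:ℝ => s*x₁+θ₂*x₂+θ₀) θ₁ x₁ hz
      have H := main_deriv q Adv
        (fun s => 1 - 1/(1+Real.exp (s*x₁+θ₂*x₂+θ₀))) θ₁ x₁ hu
      have hfun : (fun t => N₁ (θ₀,t,θ₂))
          = (fun s => ∑ f ∈ Finset.range (q+1),
              (q.choose f:ℝ) * (1 - 1/(1+Real.exp (s*x₁+θ₂*x₂+θ₀)))^f
                * (1 - (1 - 1/(1+Real.exp (s*x₁+θ₂*x₂+θ₀))))^(q-f) * Adv f) := by
        funext t
        rw [hN₁]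
        exact Finset.sum_congr rfl fun f _ => by rw [hp (θ₀,t,θ₂)]
      have hval : grad₀ (θ₀,θ₁,θ₂)
          = ∑ f ∈ Finset.range (q+1),
              (q.choose f:ℝ) * (1 - 1/(1+Real.exp (θ₁*x₁+θ₂*x₂+θ₀)))^f
                * (1 - (1 - 1/(1+Real.exp (θ₁*x₁+θ₂*x₂+θ₀))))^(q-f)
                * ((f:ℝ) - q * (1 - 1/(1+Real.exp (θ₁*x₁+θ₂*x₂+θ₀)))) * Adv f := by
        rw [hgrad₀]
        exact Finset.sum_congr rfl fun f _ => by rw [hp (θ₀,θ₁,θ₂)]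
      rw [hfun, hval]
      exact H
    · have hz : HasDerivAt (fun s:ℝ => θ₁*x₁+s*x₂+θ₀) x₂ θ₂ := by
        simpa using ((((hasDerivAt_id θ₂).mul_const x₂).const_add (θ₁*x₁))).add_const θ₀
      have hu := logistic_deriv (fun s:ℝ => θ₁*x₁+s*x₂+θ₀) θ₂ x₂ hz
      have H := main_deriv q Adv
        (fun s => 1 - 1/(1+Real.exp (θ₁*x₁+s*x₂+θ₀))) θ₂ x₂ hu
      have hfun : (fun t => N₁ (θ₀,θ₁,t))
          = (fun s => ∑ f ∈ Finset.range (q+1),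
              (q.choose f:ℝ) * (1 - 1/(1+Real.exp (θ₁*x₁+s*x₂+θ₀)))^f
                * (1 - (1 - 1/(1+Real.exp (θ₁*x₁+s*x₂+θ₀))))^(q-f) * Adv f) := by
        funext t
        rw [hN₁]
        exact Finset.sum_congr rfl fun f _ => by rw [hp (θ₀,θ₁,t)]
      have hval : grad₀ (θ₀,θ₁,θ₂)
          = ∑ f ∈ Finset.range (q+1),
              (q.choose f:ℝ) * (1 - 1/(1+Real.exp (θ₁*x₁+θ₂*x₂+θ₀)))^f
                * (1 - (1 - 1/(1+Real.exp (θ₁*x₁+θ₂*x₂+θ₀))))^(q-f)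
                * ((f:ℝ) - q * (1 - 1/(1+Real.exp (θ₁*x₁+θ₂*x₂+θ₀)))) * Adv f := by
        rw [hgrad₀]
        exact Finset.sum_congr rfl fun f _ => by rw [hp (θ₀,θ₁,θ₂)]
      rw [hfun, hval]
      exact H
end

section
/- For every integer f with 0 ≤ f ≤ x₁: G(f) − G(0) = (B−C)f + β̂₃(1−μ)²(2f² − 2(x₁−x₂)f). In other words, the approximate advantage function of the two-pool midnight model depends on the overflow quantity f only through the closed-form expression (B−C)f + β̂₃(1−μ)²(2f² − 2(x₁−x₂)f), up to an additive constant independent of f. -/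
open MeasureTheory
section Helpers
open Finset

lemma integrable_discrete' {Ω : Type*} [MeasurableSpace Ω] (P : Measure Ω) [IsProbabilityMeasure P]
    {X : Ω → ℕ} (hX : Measurable X) (g : ℕ → ℝ)
    (h : Summable fun n => |g n| * (P {ω | X ω = n}).toReal) :
    Integrable (fun ω => g (X ω)) P := by
  have hg : Measurable g := measurable_from_top
  refine ⟨(hg.comp hX).aestronglyMeasurable, ?_⟩
  rw [HasFiniteIntegral]
  have hmap : ∀ n : ℕ, P.map X {n} = P {ω | X ω = n} := by
    intro n
    rw [Measure.map_apply hX (measurableSet_singleton n)]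
    rfl
  calc ∫⁻ ω, ‖g (X ω)‖₊ ∂P = ∫⁻ n, ‖g n‖₊ ∂(P.map X) := by
        rw [lintegral_map (measurable_from_top) hX]
    _ = ∑' n, ‖g n‖₊ * P.map X {n} := by
        rw [lintegral_countable']
    _ = ∑' n, ENNReal.ofReal (|g n| * (P {ω | X ω = n}).toReal) := by
        congr 1; ext n
        rw [hmap n, ENNReal.ofReal_mul (abs_nonneg _),
          ENNReal.ofReal_toReal (measure_ne_top _ _)]
        congr 1
        exact Real.enorm_eq_ofReal_abs _
    _ = ENNReal.ofReal (∑' n, |g n| * (P {ω | X ω = n}).toReal) := by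
        rw [ENNReal.ofReal_tsum_of_nonneg (fun n => mul_nonneg (abs_nonneg _)
          ENNReal.toReal_nonneg) h]
    _ < ⊤ := ENNReal.ofReal_lt_top

lemma integral_discrete' {Ω : Type*} [MeasurableSpace Ω] (P : Measure Ω) [IsProbabilityMeasure P]
    {X : Ω → ℕ} (hX : Measurable X) (g : ℕ → ℝ)
    (h : Summable fun n => |g n| * (P {ω | X ω = n}).toReal) :
    ∫ ω, g (X ω) ∂P = ∑' n, g n * (P {ω | X ω = n}).toReal := by
  have hg : Measurable g := measurable_from_top
  have hint := integrable_discrete' P hX g h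
  have hintm : Integrable g (P.map X) := by
    rw [integrable_map_measure hg.aestronglyMeasurable hX.aemeasurable]
    exact hint
  rw [← integral_map hX.aemeasurable hg.aestronglyMeasurable, integral_countable' hintm]
  congr 1; ext n
  rw [measureReal_def, Measure.map_apply hX (measurableSet_singleton n), smul_eq_mul, mul_comm]
  rfl

lemma pois0 (x : ℝ) : HasSum (fun n => x ^ n / n.factorial) (Real.exp x) := by
  simpa [Real.exp_eq_exp_ℝ] using NormedSpace.expSeries_div_hasSum_exp x

lemma pois1 (x : ℝ) : HasSum (fun n : ℕ => (n : ℝ) * (x ^ n / n.factorial)) (x * Real.exp x) := by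
  have h := (pois0 x).mul_left x
  have heq : (fun n : ℕ => ((n + 1 : ℕ) : ℝ) * (x ^ (n + 1) / (n + 1).factorial))
      = fun n : ℕ => x * (x ^ n / n.factorial) := by
    ext n
    rw [Nat.factorial_succ, pow_succ]
    push_cast
    have h1 : (n.factorial : ℝ) ≠ 0 := Nat.cast_ne_zero.mpr n.factorial_ne_zero
    field_simp
  rw [← heq] at h
  have := (hasSum_nat_add_iff (f := fun n : ℕ => (n : ℝ) * (x ^ n / n.factorial)) 1).mp h
  simpa using this

lemma pois2 (x : ℝ) : HasSum (fun n : ℕ => (n : ℝ) * ((n : ℝ) - 1) * (x ^ n / n.factorial))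
    (x ^ 2 * Real.exp x) := by
  have h := (pois0 x).mul_left (x ^ 2)
  have heq : (fun n : ℕ => ((n + 2 : ℕ) : ℝ) * (((n + 2 : ℕ) : ℝ) - 1) * (x ^ (n + 2) / (n + 2).factorial))
      = fun n : ℕ => x ^ 2 * (x ^ n / n.factorial) := by
    ext n
    rw [Nat.factorial_succ, Nat.factorial_succ]
    push_cast
    have h1 : (n.factorial : ℝ) ≠ 0 := Nat.cast_ne_zero.mpr n.factorial_ne_zero
    have h2 : (n : ℝ) + 1 ≠ 0 := by positivity
    have h3 : (n : ℝ) + 2 ≠ 0 := by positivity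
    field_simp
    ring
  rw [← heq] at h
  have := (hasSum_nat_add_iff (f := fun n : ℕ => (n : ℝ) * ((n : ℝ) - 1) * (x ^ n / n.factorial)) 2).mp h
  simpa [Finset.sum_range_succ] using this

lemma binom0 (p q : ℝ) (n : ℕ) :
    ∑ k ∈ range (n + 1), (n.choose k : ℝ) * p ^ k * q ^ (n - k) = (p + q) ^ n := by
  rw [add_pow]
  exact Finset.sum_congr rfl fun k _ => by ring

lemma binom1 (p q : ℝ) (n : ℕ) :
    ∑ k ∈ range (n + 1), (k : ℝ) * (n.choose k : ℝ) * p ^ k * q ^ (n - k)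
      = n * p * (p + q) ^ (n - 1) := by
  cases n with
  | zero => simp
  | succ m =>
    rw [Finset.sum_range_succ']
    have : ∀ i ∈ range (m + 1),
        ((i + 1 : ℕ) : ℝ) * ((m + 1).choose (i + 1) : ℝ) * p ^ (i + 1) * q ^ (m + 1 - (i + 1))
        = ((m + 1 : ℕ) : ℝ) * p * ((m.choose i : ℝ) * p ^ i * q ^ (m - i)) := by
      intro i _
      have key : ((i + 1 : ℕ) : ℝ) * ((m + 1).choose (i + 1) : ℝ) = ((m + 1 : ℕ) : ℝ) * (m.choose i : ℝ) := by
        rw [← Nat.cast_mul, ← Nat.cast_mul, Nat.add_one_mul_choose_eq, mul_comm]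
      have hsub : m + 1 - (i + 1) = m - i := by omega
      rw [hsub, pow_succ]
      calc ((i + 1 : ℕ) : ℝ) * ((m + 1).choose (i + 1) : ℝ) * (p ^ i * p) * q ^ (m - i)
          = (((i + 1 : ℕ) : ℝ) * ((m + 1).choose (i + 1) : ℝ)) * (p ^ i * p) * q ^ (m - i) := by ring
        _ = (((m + 1 : ℕ) : ℝ) * (m.choose i : ℝ)) * (p ^ i * p) * q ^ (m - i) := by rw [key]
        _ = ((m + 1 : ℕ) : ℝ) * p * ((m.choose i : ℝ) * p ^ i * q ^ (m - i)) := by ring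
    rw [Finset.sum_congr rfl this, ← Finset.mul_sum, binom0]
    simp

lemma binom2 (p q : ℝ) (n : ℕ) :
    ∑ k ∈ range (n + 1), (k : ℝ) * ((k : ℝ) - 1) * (n.choose k : ℝ) * p ^ k * q ^ (n - k)
      = n * ((n : ℝ) - 1) * p ^ 2 * (p + q) ^ (n - 2) := by
  cases n with
  | zero => simp
  | succ m =>
    rw [Finset.sum_range_succ']
    have : ∀ i ∈ range (m + 1),
        ((i + 1 : ℕ) : ℝ) * (((i + 1 : ℕ) : ℝ) - 1) * ((m + 1).choose (i + 1) : ℝ) * p ^ (i + 1) * q ^ (m + 1 - (i + 1))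
        = ((m + 1 : ℕ) : ℝ) * p * ((i : ℝ) * (m.choose i : ℝ) * p ^ i * q ^ (m - i)) := by
      intro i _
      have key : ((i + 1 : ℕ) : ℝ) * ((m + 1).choose (i + 1) : ℝ) = ((m + 1 : ℕ) : ℝ) * (m.choose i : ℝ) := by
        rw [← Nat.cast_mul, ← Nat.cast_mul, Nat.add_one_mul_choose_eq, mul_comm]
      have hsub : m + 1 - (i + 1) = m - i := by omega
      rw [hsub, pow_succ]
      have expand : ((i + 1 : ℕ) : ℝ) * (((i + 1 : ℕ) : ℝ) - 1) * ((m + 1).choose (i + 1) : ℝ) * (p ^ i * p) * q ^ (m - i)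
          = (((i + 1 : ℕ) : ℝ) * ((m + 1).choose (i + 1) : ℝ)) * ((((i + 1 : ℕ) : ℝ) - 1) * (p ^ i * p) * q ^ (m - i)) := by
        ring
      rw [expand, key]
      push_cast
      ring
    rw [Finset.sum_congr rfl this, ← Finset.mul_sum, binom1]
    have he : m + 1 - 2 = m - 1 := by omega
    rw [he]
    push_cast
    ring

lemma poisson_moments {Ω : Type*} [MeasurableSpace Ω] (P : Measure Ω) [IsProbabilityMeasure P]
    {lam : ℝ} (hlam : 0 < lam) {X : Ω → ℕ} (hmX : Measurable X)
    (hpmf : ∀ n : ℕ, (P {ω | X ω = n}).toReal = Real.exp (-lam) * lam ^ n / n.factorial) :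
    Integrable (fun ω => (X ω : ℝ)) P ∧ Integrable (fun ω => (X ω : ℝ) ^ 2) P ∧
    ∫ ω, (X ω : ℝ) ∂P = lam ∧ ∫ ω, (X ω : ℝ) ^ 2 ∂P = lam ^ 2 + lam := by
  have hexp : Real.exp (-lam) * Real.exp lam = 1 := by
    rw [← Real.exp_add]; simp
  have hs1 : HasSum (fun n : ℕ => (n : ℝ) * (P {ω | X ω = n}).toReal) lam := by
    have h := (pois1 lam).mul_left (Real.exp (-lam))
    have heq : (fun n : ℕ => Real.exp (-lam) * ((n : ℝ) * (lam ^ n / n.factorial)))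
        = fun n : ℕ => (n : ℝ) * (P {ω | X ω = n}).toReal := by
      ext n; rw [hpmf n]; ring
    rw [heq] at h
    have : Real.exp (-lam) * (lam * Real.exp lam) = lam := by
      rw [show Real.exp (-lam) * (lam * Real.exp lam) = (Real.exp (-lam) * Real.exp lam) * lam by ring,
        hexp, one_mul]
    rwa [this] at h
  have hs2 : HasSum (fun n : ℕ => (n : ℝ) ^ 2 * (P {ω | X ω = n}).toReal) (lam ^ 2 + lam) := by
    have h := ((pois2 lam).add (pois1 lam)).mul_left (Real.exp (-lam))
    have heq : (fun n : ℕ => Real.exp (-lam) *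
        ((n : ℝ) * ((n : ℝ) - 1) * (lam ^ n / n.factorial) + (n : ℝ) * (lam ^ n / n.factorial)))
        = fun n : ℕ => (n : ℝ) ^ 2 * (P {ω | X ω = n}).toReal := by
      ext n; rw [hpmf n]; ring
    rw [heq] at h
    have : Real.exp (-lam) * (lam ^ 2 * Real.exp lam + lam * Real.exp lam) = lam ^ 2 + lam := by
      rw [show Real.exp (-lam) * (lam ^ 2 * Real.exp lam + lam * Real.exp lam)
        = (Real.exp (-lam) * Real.exp lam) * (lam ^ 2 + lam) by ring, hexp, one_mul]
    rwa [this] at h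
  have habs1 : Summable fun n : ℕ => |((n : ℕ) : ℝ)| * (P {ω | X ω = n}).toReal := by
    refine hs1.summable.congr fun n => ?_
    rw [abs_of_nonneg (Nat.cast_nonneg n)]
  have habs2 : Summable fun n : ℕ => |((n : ℕ) : ℝ) ^ 2| * (P {ω | X ω = n}).toReal := by
    refine hs2.summable.congr fun n => ?_
    rw [abs_of_nonneg (by positivity)]
  refine ⟨integrable_discrete' P hmX _ habs1, integrable_discrete' P hmX _ habs2, ?_, ?_⟩
  · rw [integral_discrete' P hmX _ habs1, hs1.tsum_eq]
  · rw [integral_discrete' P hmX _ habs2, hs2.tsum_eq]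

lemma binom_tsum {Ω : Type*} [MeasurableSpace Ω] (P : Measure Ω) [IsProbabilityMeasure P]
    {μ : ℝ} {n : ℕ} {X : Ω → ℕ}
    (hpmf : ∀ k : ℕ, (P {ω | X ω = k}).toReal = (n.choose k : ℝ) * μ ^ k * (1 - μ) ^ (n - k))
    (g : ℕ → ℝ) :
    (∀ k, k ∉ range (n + 1) → g k * (P {ω | X ω = k}).toReal = 0) := by
  intro k hk
  rw [hpmf k, Nat.choose_eq_zero_of_lt (by simpa using hk)]
  simp

lemma binomial_moments {Ω : Type*} [MeasurableSpace Ω] (P : Measure Ω) [IsProbabilityMeasure P]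
    {μ : ℝ} (hμ0 : 0 ≤ μ) (hμ1 : μ ≤ 1) (n : ℕ) {X : Ω → ℕ} (hmX : Measurable X)
    (hpmf : ∀ k : ℕ, (P {ω | X ω = k}).toReal = (n.choose k : ℝ) * μ ^ k * (1 - μ) ^ (n - k)) :
    Integrable (fun ω => (X ω : ℝ)) P ∧ Integrable (fun ω => (X ω : ℝ) ^ 2) P ∧
    ∫ ω, (X ω : ℝ) ∂P = n * μ ∧
    ∫ ω, (X ω : ℝ) ^ 2 ∂P = (n : ℝ) * ((n : ℝ) - 1) * μ ^ 2 + n * μ := by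
  have hpq : μ + (1 - μ) = 1 := by ring
  have hz1 := binom_tsum P hpmf (fun k => |(k : ℝ)|)
  have hz2 := binom_tsum P hpmf (fun k => |(k : ℝ) ^ 2|)
  have habs1 : Summable fun k : ℕ => |((k : ℕ) : ℝ)| * (P {ω | X ω = k}).toReal :=
    summable_of_ne_finset_zero hz1
  have habs2 : Summable fun k : ℕ => |((k : ℕ) : ℝ) ^ 2| * (P {ω | X ω = k}).toReal :=
    summable_of_ne_finset_zero hz2
  refine ⟨integrable_discrete' P hmX _ habs1, integrable_discrete' P hmX _ habs2, ?_, ?_⟩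
  · rw [integral_discrete' P hmX _ habs1,
      tsum_eq_sum (binom_tsum P hpmf (fun k => (k : ℝ)))]
    have : ∀ k ∈ range (n + 1), (k : ℝ) * (P {ω | X ω = k}).toReal
        = (k : ℝ) * (n.choose k : ℝ) * μ ^ k * (1 - μ) ^ (n - k) := by
      intro k _; rw [hpmf k]; ring
    rw [Finset.sum_congr rfl this, binom1, hpq, one_pow, mul_one]
  · rw [integral_discrete' P hmX _ habs2,
      tsum_eq_sum (binom_tsum P hpmf (fun k => (k : ℝ) ^ 2))]
    have : ∀ k ∈ range (n + 1), (k : ℝ) ^ 2 * (P {ω | X ω = k}).toReal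
        = (k : ℝ) * ((k : ℝ) - 1) * (n.choose k : ℝ) * μ ^ k * (1 - μ) ^ (n - k)
          + (k : ℝ) * (n.choose k : ℝ) * μ ^ k * (1 - μ) ^ (n - k) := by
      intro k _; rw [hpmf k]; ring
    rw [Finset.sum_congr rfl this, Finset.sum_add_distrib, binom1, binom2, hpq, one_pow,
      one_pow, mul_one, mul_one]

lemma pair_moments {Ω : Type*} [MeasurableSpace Ω] (P : Measure Ω) [IsProbabilityMeasure P]
    {A D : Ω → ℕ} (hInd : ProbabilityTheory.IndepFun A D P)
    (c mA m2A mD m2D : ℝ)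
    (hIA : Integrable (fun ω => (A ω : ℝ)) P) (hIA2 : Integrable (fun ω => (A ω : ℝ) ^ 2) P)
    (hID : Integrable (fun ω => (D ω : ℝ)) P) (hID2 : Integrable (fun ω => (D ω : ℝ) ^ 2) P)
    (hEA : ∫ ω, (A ω : ℝ) ∂P = mA) (hEA2 : ∫ ω, (A ω : ℝ) ^ 2 ∂P = m2A)
    (hED : ∫ ω, (D ω : ℝ) ∂P = mD) (hED2 : ∫ ω, (D ω : ℝ) ^ 2 ∂P = m2D) :
    Integrable (fun ω => c + (A ω : ℝ) - (D ω : ℝ)) P ∧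
    Integrable (fun ω => (c + (A ω : ℝ) - (D ω : ℝ)) ^ 2) P ∧
    ∫ ω, (c + (A ω : ℝ) - (D ω : ℝ)) ∂P = c + mA - mD ∧
    ∫ ω, (c + (A ω : ℝ) - (D ω : ℝ)) ^ 2 ∂P
      = c ^ 2 + m2A + m2D + 2 * c * mA - 2 * c * mD - 2 * mA * mD := by
  have hcast : Measurable (fun n : ℕ => (n : ℝ)) := measurable_from_top
  have hIndR : ProbabilityTheory.IndepFun (fun ω => (A ω : ℝ)) (fun ω => (D ω : ℝ)) P :=
    hInd.comp hcast hcast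
  have hIAD : Integrable (fun ω => (A ω : ℝ) * (D ω : ℝ)) P :=
    hIndR.integrable_mul hIA hID
  have hEAD : ∫ ω, (A ω : ℝ) * (D ω : ℝ) ∂P = mA * mD := by
    have := ProbabilityTheory.IndepFun.integral_fun_mul_eq_mul_integral hIndR hIA.aestronglyMeasurable hID.aestronglyMeasurable
    rw [hEA, hED] at this
    exact this
  have hIu : Integrable (fun ω => c + (A ω : ℝ) - (D ω : ℝ)) P :=
    ((integrable_const c).add hIA).sub hID
  have hsq : (fun ω => (c + (A ω : ℝ) - (D ω : ℝ)) ^ 2)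
      = fun ω => c ^ 2 + (A ω : ℝ) ^ 2 + (D ω : ℝ) ^ 2 + (2 * c) * (A ω : ℝ)
        - (2 * c) * (D ω : ℝ) - 2 * ((A ω : ℝ) * (D ω : ℝ)) := by
    ext ω; ring
  have hIu2 : Integrable (fun ω => (c + (A ω : ℝ) - (D ω : ℝ)) ^ 2) P := by
    rw [hsq]
    exact (((((integrable_const (c ^ 2)).add hIA2).add hID2).add
      (hIA.const_mul (2 * c))).sub (hID.const_mul (2 * c))).sub (hIAD.const_mul 2)
  have i1 : Integrable (fun ω => c + (A ω : ℝ)) P := (integrable_const c).add hIA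
  have i2 : Integrable (fun ω => c ^ 2 + (A ω : ℝ) ^ 2) P := (integrable_const _).add hIA2
  have i3 : Integrable (fun ω => c ^ 2 + (A ω : ℝ) ^ 2 + (D ω : ℝ) ^ 2) P := i2.add hID2
  have i4 : Integrable (fun ω => c ^ 2 + (A ω : ℝ) ^ 2 + (D ω : ℝ) ^ 2
      + (2 * c) * (A ω : ℝ)) P := i3.add (hIA.const_mul (2 * c))
  have i5 : Integrable (fun ω => c ^ 2 + (A ω : ℝ) ^ 2 + (D ω : ℝ) ^ 2
      + (2 * c) * (A ω : ℝ) - (2 * c) * (D ω : ℝ)) P := i4.sub (hID.const_mul (2 * c))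
  refine ⟨hIu, hIu2, ?_, ?_⟩
  · rw [integral_sub i1 hID, integral_add (integrable_const c) hIA, integral_const, hEA, hED]
    simp
  · rw [hsq, integral_sub i5 (hIAD.const_mul 2),
      integral_sub i4 (hID.const_mul (2 * c)),
      integral_add i3 (hIA.const_mul (2 * c)),
      integral_add i2 hID2,
      integral_add (integrable_const (c ^ 2)) hIA2,
      integral_const, integral_const_mul, integral_const_mul, integral_const_mul,
      hEA, hEA2, hED, hED2, hEAD]
    simp
    ring

lemma v_integral {Ω : Type*} [MeasurableSpace Ω] (P : Measure Ω) [IsProbabilityMeasure P]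
    (β₁ β₃ : ℝ) {u w : Ω → ℝ}
    (hIu : Integrable u P) (hIu2 : Integrable (fun ω => u ω ^ 2) P)
    (hIw : Integrable w P) (hIw2 : Integrable (fun ω => w ω ^ 2) P) :
    ∫ ω, (β₁ * (u ω + w ω) + β₃ * (u ω ^ 2 + w ω ^ 2)) ∂P
      = β₁ * ((∫ ω, u ω ∂P) + ∫ ω, w ω ∂P) + β₃ * ((∫ ω, u ω ^ 2 ∂P) + ∫ ω, w ω ^ 2 ∂P) := by
  have j1 : Integrable (fun ω => β₁ * (u ω + w ω)) P := (hIu.add hIw).const_mul β₁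
  have j2 : Integrable (fun ω => β₃ * (u ω ^ 2 + w ω ^ 2)) P := (hIu2.add hIw2).const_mul β₃
  rw [integral_add j1 j2, integral_const_mul, integral_const_mul,
    integral_add hIu hIw, integral_add hIu2 hIw2]

end Helpers

/-- In the symmetric two-pool midnight model with approximate value function
`v̂(u,w) = β̂₁(u+w) + β̂₃(u²+w²)`, the approximate objective
`G(f) = (B−C)f + E[v̂(x₁ − f + A₁ − D₁, x₂ + f + A₂ − D₂)]`
(with `A₁, A₂ ∼ Poisson(lam)`, `D₁ ∼ Bin(x₁−f, μ)`, `D₂ ∼ Bin(x₂+f, μ)` mutually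
independent, and `G(0)` defined with its own such random variables) satisfies, for every
`0 ≤ f ≤ x₁`,
`G(f) − G(0) = (B−C)f + β̂₃(1−μ)²(2f² − 2(x₁−x₂)f)`. -/
theorem stmt_16 {Ω : Type*} [MeasurableSpace Ω] (P : Measure Ω) [IsProbabilityMeasure P]
    (lam : ℝ) (hlam : 0 < lam) (μ : ℝ) (hμ0 : 0 ≤ μ) (hμ1 : μ ≤ 1)
    (B C β₁ β₃ : ℝ)
    (v : ℝ → ℝ → ℝ) (hv : ∀ u w, v u w = β₁ * (u + w) + β₃ * (u ^ 2 + w ^ 2))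
    (x₁ x₂ f : ℕ) (hf : f ≤ x₁)
    (A₁ A₂ D₁ D₂ A₁' A₂' D₁' D₂' : Ω → ℕ)
    (hmA₁ : Measurable A₁) (hmA₂ : Measurable A₂)
    (hmD₁ : Measurable D₁) (hmD₂ : Measurable D₂)
    (hmA₁' : Measurable A₁') (hmA₂' : Measurable A₂')
    (hmD₁' : Measurable D₁') (hmD₂' : Measurable D₂')
    (hA₁ : ∀ n : ℕ, (P {ω | A₁ ω = n}).toReal = Real.exp (-lam) * lam ^ n / n.factorial)
    (hA₂ : ∀ n : ℕ, (P {ω | A₂ ω = n}).toReal = Real.exp (-lam) * lam ^ n / n.factorial)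
    (hA₁' : ∀ n : ℕ, (P {ω | A₁' ω = n}).toReal = Real.exp (-lam) * lam ^ n / n.factorial)
    (hA₂' : ∀ n : ℕ, (P {ω | A₂' ω = n}).toReal = Real.exp (-lam) * lam ^ n / n.factorial)
    (hD₁ : ∀ k : ℕ, (P {ω | D₁ ω = k}).toReal
      = ((x₁ - f).choose k : ℝ) * μ ^ k * (1 - μ) ^ (x₁ - f - k))
    (hD₂ : ∀ k : ℕ, (P {ω | D₂ ω = k}).toReal
      = ((x₂ + f).choose k : ℝ) * μ ^ k * (1 - μ) ^ (x₂ + f - k))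
    (hD₁' : ∀ k : ℕ, (P {ω | D₁' ω = k}).toReal
      = (x₁.choose k : ℝ) * μ ^ k * (1 - μ) ^ (x₁ - k))
    (hD₂' : ∀ k : ℕ, (P {ω | D₂' ω = k}).toReal
      = (x₂.choose k : ℝ) * μ ^ k * (1 - μ) ^ (x₂ - k))
    (hindep : ProbabilityTheory.iIndepFun
      ![A₁, A₂, D₁, D₂] P)
    (hindep' : ProbabilityTheory.iIndepFun
      ![A₁', A₂', D₁', D₂'] P) :
    ((B - C) * f
        + ∫ ω, v ((x₁ : ℝ) - f + A₁ ω - D₁ ω) ((x₂ : ℝ) + f + A₂ ω - D₂ ω) ∂P)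
      - ((B - C) * (0 : ℕ)
        + ∫ ω, v ((x₁ : ℝ) + A₁' ω - D₁' ω) ((x₂ : ℝ) + A₂' ω - D₂' ω) ∂P)
    = (B - C) * f + β₃ * (1 - μ) ^ 2 * (2 * (f : ℝ) ^ 2 - 2 * ((x₁ : ℝ) - x₂) * f) := by
  obtain ⟨iA1, iA1s, eA1, eA1s⟩ := poisson_moments P hlam hmA₁ hA₁
  obtain ⟨iA2, iA2s, eA2, eA2s⟩ := poisson_moments P hlam hmA₂ hA₂
  obtain ⟨iA1', iA1s', eA1', eA1s'⟩ := poisson_moments P hlam hmA₁' hA₁'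
  obtain ⟨iA2', iA2s', eA2', eA2s'⟩ := poisson_moments P hlam hmA₂' hA₂'
  obtain ⟨iD1, iD1s, eD1, eD1s⟩ := binomial_moments P hμ0 hμ1 (x₁ - f) hmD₁ hD₁
  obtain ⟨iD2, iD2s, eD2, eD2s⟩ := binomial_moments P hμ0 hμ1 (x₂ + f) hmD₂ hD₂
  obtain ⟨iD1', iD1s', eD1', eD1s'⟩ := binomial_moments P hμ0 hμ1 x₁ hmD₁' hD₁'
  obtain ⟨iD2', iD2s', eD2', eD2s'⟩ := binomial_moments P hμ0 hμ1 x₂ hmD₂' hD₂'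
  have ind1 : ProbabilityTheory.IndepFun A₁ D₁ P := by
    have := hindep.indepFun (i := 0) (j := 2) (by decide)
    simpa using this
  have ind2 : ProbabilityTheory.IndepFun A₂ D₂ P := by
    have := hindep.indepFun (i := 1) (j := 3) (by decide)
    simpa using this
  have ind1' : ProbabilityTheory.IndepFun A₁' D₁' P := by
    have := hindep'.indepFun (i := 0) (j := 2) (by decide)
    simpa using this
  have ind2' : ProbabilityTheory.IndepFun A₂' D₂' P := by
    have := hindep'.indepFun (i := 1) (j := 3) (by decide)
    simpa using this
  obtain ⟨Iu, Iu2, Eu, Eu2⟩ := pair_moments P ind1 ((x₁ : ℝ) - f) _ _ _ _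
    iA1 iA1s iD1 iD1s eA1 eA1s eD1 eD1s
  obtain ⟨Iw, Iw2, Ew, Ew2⟩ := pair_moments P ind2 ((x₂ : ℝ) + f) _ _ _ _
    iA2 iA2s iD2 iD2s eA2 eA2s eD2 eD2s
  obtain ⟨Iu', Iu2', Eu', Eu2'⟩ := pair_moments P ind1' ((x₁ : ℝ)) _ _ _ _
    iA1' iA1s' iD1' iD1s' eA1' eA1s' eD1' eD1s'
  obtain ⟨Iw', Iw2', Ew', Ew2'⟩ := pair_moments P ind2' ((x₂ : ℝ)) _ _ _ _
    iA2' iA2s' iD2' iD2s' eA2' eA2s' eD2' eD2s'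
  simp only [hv]
  rw [v_integral P β₁ β₃ Iu Iu2 Iw Iw2, v_integral P β₁ β₃ Iu' Iu2' Iw' Iw2',
    Eu, Eu2, Ew, Ew2, Eu', Eu2', Ew', Ew2']
  have hc : ((x₁ - f : ℕ) : ℝ) = (x₁ : ℝ) - f := by
    rw [Nat.cast_sub hf]
  rw [hc]
  push_cast
  ring
end

section
/- Assume: V(s) ≥ 1 for all s; the drift condition Σ_{s'} P̃η(s,s') V(s') ≤ b V(s) + d·1_C(s) holds for all s ∈ S with b ∈ (0,1), d ≥ 0 and C ⊆ S; vη satisfies the Poisson equation vη(s) = g̃η(s) − γη + Σ_{s'} P̃η(s,s') vη(s') for all s, with ‖vη‖_{∞,V} < ∞; and g̃(s,f) ≥ 0 with g̃η(s) ≤ V(s) for all s and f ∈ A(s). Then |N₁| ≤ (Σ_s μη(s) V(s)) · ‖r−1‖∞ · ((b+d)‖vη‖_{∞,V} + 1) and |N₂| ≤ ‖μθ − μη‖_{1,V} · ‖r−1‖∞ · ((b+d)‖vη‖_{∞,V} + 1). (Explicit-constant form of the decay rates in Proposition 1: N₁ = O(‖r−1‖∞), and N₂ = O(‖r−1‖∞²)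 once ‖μθ − μη‖_{1,V} = O(‖r−1‖∞).) -/
open scoped BigOperators ENNReal

/-- **Explicit-constant form of the decay rates in Proposition 1.** Under `V ≥ 1`, the
drift condition for `P̃η`, the Poisson equation for `vη` with `‖vη‖_{∞,V} < ∞`, and
nonnegative one-day costs with `g̃η ≤ V`, one has
`|N₁| ≤ (∑ μη V) · ‖r−1‖_∞ · ((b+d)‖vη‖_{∞,V} + 1)` and
`|N₂| ≤ ‖μθ − μη‖_{1,V} · ‖r−1‖_∞ · ((b+d)‖vη‖_{∞,V} + 1)`
(right-hand sides evaluated in `ℝ≥0∞`). -/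
theorem stmt_17 {S F : Type*} [Countable S]
    (A : S → Finset F) (hA : ∀ s, (A s).Nonempty)
    (πθ πη : S → F → ℝ)
    (hπθ0 : ∀ s, ∀ f ∈ A s, 0 ≤ πθ s f) (hπθ1 : ∀ s, ∑ f ∈ A s, πθ s f = 1)
    (hπη0 : ∀ s, ∀ f ∈ A s, 0 < πη s f) (hπη1 : ∀ s, ∑ f ∈ A s, πη s f = 1)
    (r : S → F → ℝ) (hr : ∀ s f, r s f = πθ s f / πη s f)
    (p : S → F → S → ℝ) (hp0 : ∀ s f s', 0 ≤ p s f s') (hp1 : ∀ s f, ∑' s', p s f s' = 1)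
    (g : S → F → ℝ) (hg0 : ∀ s, ∀ f ∈ A s, 0 ≤ g s f)
    (μθ μη : S → ℝ)
    (hμθ0 : ∀ s, 0 ≤ μθ s) (hμθ1 : ∑' s, μθ s = 1)
    (hμη0 : ∀ s, 0 ≤ μη s) (hμη1 : ∑' s, μη s = 1)
    (vη : S → ℝ)
    (Pθ Pη : S → S → ℝ)
    (hPθ : ∀ s s', Pθ s s' = ∑ f ∈ A s, πθ s f * p s f s')
    (hPη : ∀ s s', Pη s s' = ∑ f ∈ A s, πη s f * p s f s')
    (gθ gη : S → ℝ)
    (hgθ : ∀ s, gθ s = ∑ f ∈ A s, πθ s f * g s f)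
    (hgη : ∀ s, gη s = ∑ f ∈ A s, πη s f * g s f)
    (γη : ℝ) (hγη : γη = ∑' s, μη s * gη s)
    (N : S → ℝ)
    (hN : ∀ s, N s = gθ s - γη + (∑' s', Pθ s s' * vη s') - vη s)
    (V : S → ℝ) (hV : ∀ s, 1 ≤ V s)
    (b d : ℝ) (hb0 : 0 < b) (hb1 : b < 1) (hd : 0 ≤ d) (C : Set S)
    (hdriftSummable : ∀ s, Summable fun s' => Pη s s' * V s')
    (hdrift : ∀ s, ∑' s', Pη s s' * V s' ≤ b * V s + d * C.indicator (fun _ => (1 : ℝ)) s)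
    (hsumθ : ∀ s, Summable fun s' => Pθ s s' * vη s')
    (hsumη : ∀ s, Summable fun s' => Pη s s' * vη s')
    (hPoisson : ∀ s, vη s = gη s - γη + ∑' s', Pη s s' * vη s')
    (hvfin : (⨆ s, ENNReal.ofReal (|vη s| / V s)) ≠ ⊤)
    (hgV : ∀ s, gη s ≤ V s) :
    ENNReal.ofReal |∑' s, μη s * N s|
        ≤ (∑' s, ENNReal.ofReal (μη s * V s))
          * ((⨆ s, ENNReal.ofReal (∑ f ∈ A s, |r s f - 1|))
            * (ENNReal.ofReal (b + d) * (⨆ s, ENNReal.ofReal (|vη s| / V s)) + 1))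
    ∧ ENNReal.ofReal |∑' s, (μθ s - μη s) * N s|
        ≤ (∑' s, ENNReal.ofReal (|μθ s - μη s| * V s))
          * ((⨆ s, ENNReal.ofReal (∑ f ∈ A s, |r s f - 1|))
            * (ENNReal.ofReal (b + d) * (⨆ s, ENNReal.ofReal (|vη s| / V s)) + 1)) := by

  classical
  set M := (⨆ s, ENNReal.ofReal (|vη s| / V s)).toReal with hMdef
  have hM0 : 0 ≤ M := ENNReal.toReal_nonneg
  have hVpos : ∀ s, (0:ℝ) < V s := fun s => lt_of_lt_of_le one_pos (hV s)
  have hMbound : ∀ s, |vη s| ≤ M * V s := by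
    intro s
    have h1 : |vη s| / V s ≤ M := by
      have h2 := ENNReal.toReal_mono hvfin
        (le_iSup (fun s => ENNReal.ofReal (|vη s| / V s)) s)
      rwa [ENNReal.toReal_ofReal (div_nonneg (abs_nonneg _) (hVpos s).le)] at h2
    have := (div_le_iff₀ (hVpos s)).mp h1
    linarith
  have hbd0 : (0:ℝ) ≤ b + d := by linarith
  -- per-action summability of p * V
  have hpV : ∀ s, ∀ f ∈ A s, Summable fun s' => p s f s' * V s' := by
    intro s f hf
    have hpos := hπη0 s f hf
    have hsum : Summable fun s' => πη s f * (p s f s' * V s') := by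
      apply (hdriftSummable s).of_nonneg_of_le
      · intro s'
        have := hp0 s f s'
        have := (hVpos s').le
        positivity
      · intro s'
        rw [hPη, Finset.sum_mul]
        have : πη s f * p s f s' * V s' ≤ ∑ f' ∈ A s, πη s f' * p s f' s' * V s' := by
          apply Finset.single_le_sum (f := fun f' => πη s f' * p s f' s' * V s') _ hf
          intro f' hf'
          have := (hπη0 s f' hf').le
          have := hp0 s f' s'
          have := (hVpos s').le
          positivity
        linarith [this]
    have h3 := hsum.mul_left (πη s f)⁻¹
    have h4 : (fun s' => (πη s f)⁻¹ * (πη s f * (p s f s' * V s'))) =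
        fun s' => p s f s' * V s' := by
      funext s'
      rw [inv_mul_cancel_left₀ (ne_of_gt hpos)]
    rwa [h4] at h3
  -- summability of p * vη
  have hpv : ∀ s, ∀ f ∈ A s, Summable fun s' => p s f s' * vη s' := by
    intro s f hf
    apply Summable.of_abs
    apply ((hpV s f hf).mul_left M).of_nonneg_of_le (fun s' => abs_nonneg _)
    intro s'
    rw [abs_mul, abs_of_nonneg (hp0 s f s')]
    calc p s f s' * |vη s'| ≤ p s f s' * (M * V s') :=
          mul_le_mul_of_nonneg_left (hMbound s') (hp0 s f s')
      _ = M * (p s f s' * V s') := by ring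
  -- bound on |∑' p v|
  have habs : ∀ s, ∀ f ∈ A s, |∑' s', p s f s' * vη s'| ≤ M * ∑' s', p s f s' * V s' := by
    intro s f hf
    calc |∑' s', p s f s' * vη s'| ≤ ∑' s', |p s f s'| * |vη s'| := by
          simpa [abs_mul] using
            norm_tsum_le_tsum_norm (f := fun s' => p s f s' * vη s') (hpv s f hf).abs
      _ ≤ ∑' s', M * (p s f s' * V s') := by
          apply Summable.tsum_le_tsum _ ((hpv s f hf).abs.congr (fun s' => abs_mul _ _))
            ((hpV s f hf).mul_left M)
          intro s'
          rw [abs_of_nonneg (hp0 s f s')]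
          calc p s f s' * |vη s'| ≤ p s f s' * (M * V s') :=
                mul_le_mul_of_nonneg_left (hMbound s') (hp0 s f s')
            _ = M * (p s f s' * V s') := by ring
      _ = M * ∑' s', p s f s' * V s' := tsum_mul_left
  -- drift bound per action
  have hT : ∀ s, ∀ f ∈ A s, πη s f * ∑' s', p s f s' * V s' ≤ (b + d) * V s := by
    intro s f hf
    have h1 : πη s f * ∑' s', p s f s' * V s' = ∑' s', πη s f * (p s f s' * V s') :=
      tsum_mul_left.symm
    have h2 : (∑' s', πη s f * (p s f s' * V s')) ≤ ∑' s', Pη s s' * V s' := by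
      apply Summable.tsum_le_tsum _ ((hpV s f hf).mul_left _) (hdriftSummable s)
      intro s'
      rw [hPη, Finset.sum_mul]
      have : πη s f * p s f s' * V s' ≤ ∑ f' ∈ A s, πη s f' * p s f' s' * V s' := by
        apply Finset.single_le_sum (f := fun f' => πη s f' * p s f' s' * V s') _ hf
        intro f' hf'
        have := (hπη0 s f' hf').le
        have := hp0 s f' s'
        have := (hVpos s').le
        positivity
      linarith [this]
    have h3 : d * C.indicator (fun _ => (1:ℝ)) s ≤ d * V s := by
      apply mul_le_mul_of_nonneg_left _ hd
      by_cases hs : s ∈ C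
      · simp [Set.indicator_of_mem hs]; exact hV s
      · simp [Set.indicator_of_notMem hs]; linarith [hVpos s]
    have h4 := hdrift s
    have h5 : b * V s ≤ b * V s := le_refl _
    have : πη s f * ∑' s', p s f s' * V s' ≤ b * V s + d * V s := by
      rw [h1]; linarith
    linarith [this]
  -- decomposition of N
  have hNdecomp : ∀ s, N s =
      ∑ f ∈ A s, (πη s f * (r s f - 1)) * (g s f + ∑' s', p s f s' * vη s') := by
    intro s
    have hPv : ∀ (π : S → F → ℝ),
        (∑' s', (∑ f ∈ A s, π s f * p s f s') * vη s')
          = ∑ f ∈ A s, π s f * ∑' s', p s f s' * vη s' := by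
      intro π
      have e1 : (fun s' => (∑ f ∈ A s, π s f * p s f s') * vη s') =
          fun s' => ∑ f ∈ A s, π s f * (p s f s' * vη s') := by
        funext s'
        rw [Finset.sum_mul]
        exact Finset.sum_congr rfl fun f _ => mul_assoc _ _ _
      rw [e1, Summable.tsum_finsetSum (fun f hf => (hpv s f hf).mul_left _)]
      exact Finset.sum_congr rfl fun f _ => tsum_mul_left
    have hPθv : (∑' s', Pθ s s' * vη s')
        = ∑ f ∈ A s, πθ s f * ∑' s', p s f s' * vη s' := by
      rw [tsum_congr (fun s' => by rw [hPθ s s'])]; exact hPv πθ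
    have hPηv : (∑' s', Pη s s' * vη s')
        = ∑ f ∈ A s, πη s f * ∑' s', p s f s' * vη s' := by
      rw [tsum_congr (fun s' => by rw [hPη s s'])]; exact hPv πη
    have hdiff : ∀ f ∈ A s, πθ s f - πη s f = πη s f * (r s f - 1) := by
      intro f hf
      rw [hr s f]
      field_simp [(hπη0 s f hf).ne']
    rw [hN s]
    rw [hPoisson s]
    rw [hgθ s, hgη s, hPθv, hPηv]
    rw [show (∑ f ∈ A s, πθ s f * g s f) - γη
        + (∑ f ∈ A s, πθ s f * ∑' s', p s f s' * vη s')
        - ((∑ f ∈ A s, πη s f * g s f) - γη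
          + ∑ f ∈ A s, πη s f * ∑' s', p s f s' * vη s')
        = ∑ f ∈ A s, ((πθ s f - πη s f) * g s f
            + (πθ s f - πη s f) * ∑' s', p s f s' * vη s') by
      simp only [sub_mul]
      rw [Finset.sum_add_distrib, Finset.sum_sub_distrib, Finset.sum_sub_distrib]
      ring]
    apply Finset.sum_congr rfl
    intro f hf
    rw [hdiff f hf]
    ring
  -- the pointwise real bound
  have hNbound : ∀ s, |N s| ≤ (∑ f ∈ A s, |r s f - 1|) * (((b + d) * M + 1) * V s) := by
    intro s
    rw [hNdecomp s, Finset.sum_mul]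
    calc |∑ f ∈ A s, (πη s f * (r s f - 1)) * (g s f + ∑' s', p s f s' * vη s')|
        ≤ ∑ f ∈ A s, |(πη s f * (r s f - 1)) * (g s f + ∑' s', p s f s' * vη s')| :=
          Finset.abs_sum_le_sum_abs _ _
      _ ≤ ∑ f ∈ A s, |r s f - 1| * (((b + d) * M + 1) * V s) := by
          apply Finset.sum_le_sum
          intro f hf
          have hπpos := hπη0 s f hf
          have hg0f := hg0 s f hf
          have hgb : πη s f * g s f ≤ V s := by
            have : πη s f * g s f ≤ ∑ f' ∈ A s, πη s f' * g s f' := by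
              apply Finset.single_le_sum (f := fun f' => πη s f' * g s f') _ hf
              intro f' hf'
              exact mul_nonneg (hπη0 s f' hf').le (hg0 s f' hf')
            rw [← hgη s] at this
            linarith [hgV s]
          have hSb : πη s f * |∑' s', p s f s' * vη s'| ≤ (b + d) * M * V s := by
            calc πη s f * |∑' s', p s f s' * vη s'|
                ≤ πη s f * (M * ∑' s', p s f s' * V s') :=
                  mul_le_mul_of_nonneg_left (habs s f hf) hπpos.le
              _ = M * (πη s f * ∑' s', p s f s' * V s') := by ring
              _ ≤ M * ((b + d) * V s) :=
                  mul_le_mul_of_nonneg_left (hT s f hf) hM0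
              _ = (b + d) * M * V s := by ring
          rw [abs_mul, abs_mul, abs_of_nonneg hπpos.le]
          have h1 : |g s f + ∑' s', p s f s' * vη s'|
              ≤ g s f + |∑' s', p s f s' * vη s'| := by
            calc |g s f + ∑' s', p s f s' * vη s'|
                ≤ |g s f| + |∑' s', p s f s' * vη s'| := abs_add_le _ _
              _ = g s f + |∑' s', p s f s' * vη s'| := by rw [abs_of_nonneg hg0f]
          have h2 : πη s f * |g s f + ∑' s', p s f s' * vη s'|
              ≤ ((b + d) * M + 1) * V s := by
            calc πη s f * |g s f + ∑' s', p s f s' * vη s'|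
                ≤ πη s f * (g s f + |∑' s', p s f s' * vη s'|) :=
                  mul_le_mul_of_nonneg_left h1 hπpos.le
              _ = πη s f * g s f + πη s f * |∑' s', p s f s' * vη s'| := by ring
              _ ≤ V s + (b + d) * M * V s := add_le_add hgb hSb
              _ = ((b + d) * M + 1) * V s := by ring
          calc πη s f * |r s f - 1| * |g s f + ∑' s', p s f s' * vη s'|
              = |r s f - 1| * (πη s f * |g s f + ∑' s', p s f s' * vη s'|) := by ring
            _ ≤ |r s f - 1| * (((b + d) * M + 1) * V s) :=
                mul_le_mul_of_nonneg_left h2 (abs_nonneg _)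
  -- ENNReal constant
  set K : ℝ≥0∞ := (⨆ s, ENNReal.ofReal (∑ f ∈ A s, |r s f - 1|))
      * (ENNReal.ofReal (b + d) * (⨆ s, ENNReal.ofReal (|vη s| / V s)) + 1) with hKdef
  have hMenn : ENNReal.ofReal M = ⨆ s, ENNReal.ofReal (|vη s| / V s) :=
    ENNReal.ofReal_toReal hvfin
  have hNenn : ∀ s, ENNReal.ofReal |N s| ≤ ENNReal.ofReal (V s) * K := by
    intro s
    have hR0 : (0:ℝ) ≤ ∑ f ∈ A s, |r s f - 1| :=
      Finset.sum_nonneg fun f _ => abs_nonneg _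
    calc ENNReal.ofReal |N s|
        ≤ ENNReal.ofReal ((∑ f ∈ A s, |r s f - 1|) * (((b + d) * M + 1) * V s)) :=
          ENNReal.ofReal_le_ofReal (hNbound s)
      _ = ENNReal.ofReal (∑ f ∈ A s, |r s f - 1|)
            * (ENNReal.ofReal ((b + d) * M + 1) * ENNReal.ofReal (V s)) := by
          rw [ENNReal.ofReal_mul hR0, ENNReal.ofReal_mul (by positivity)]
      _ = ENNReal.ofReal (V s) * (ENNReal.ofReal (∑ f ∈ A s, |r s f - 1|)
            * (ENNReal.ofReal (b + d) * ENNReal.ofReal M + 1)) := by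
          rw [ENNReal.ofReal_add (by positivity) zero_le_one, ENNReal.ofReal_one,
            ENNReal.ofReal_mul hbd0]
          ring
      _ ≤ ENNReal.ofReal (V s) * K := by
          rw [hKdef, hMenn]
          exact mul_le_mul_right (mul_le_mul_left
            (le_iSup (fun s => ENNReal.ofReal (∑ f ∈ A s, |r s f - 1|)) s) _) _
  -- generic weighted bound
  have key : ∀ w : S → ℝ, ENNReal.ofReal |∑' s, w s * N s|
      ≤ (∑' s, ENNReal.ofReal (|w s| * V s)) * K := by
    intro w
    by_cases hsum : Summable fun s => w s * N s
    · have h1 : |∑' s, w s * N s| ≤ ∑' s, |w s| * |N s| := by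
        simpa [abs_mul] using norm_tsum_le_tsum_norm (f := fun s => w s * N s) hsum.abs
      have hsum' : Summable fun s => |w s| * |N s| :=
        hsum.abs.congr (fun s => abs_mul _ _)
      calc ENNReal.ofReal |∑' s, w s * N s|
          ≤ ENNReal.ofReal (∑' s, |w s| * |N s|) := ENNReal.ofReal_le_ofReal h1
        _ = ∑' s, ENNReal.ofReal (|w s| * |N s|) :=
            ENNReal.ofReal_tsum_of_nonneg (fun s => mul_nonneg (abs_nonneg _) (abs_nonneg _))
              hsum'
        _ ≤ ∑' s, ENNReal.ofReal (|w s| * V s) * K := by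
            apply ENNReal.tsum_le_tsum
            intro s
            rw [ENNReal.ofReal_mul (abs_nonneg _), ENNReal.ofReal_mul (abs_nonneg _)]
            calc ENNReal.ofReal |w s| * ENNReal.ofReal |N s|
                ≤ ENNReal.ofReal |w s| * (ENNReal.ofReal (V s) * K) :=
                  mul_le_mul_right (hNenn s) _
              _ = ENNReal.ofReal |w s| * ENNReal.ofReal (V s) * K := by ring
        _ = (∑' s, ENNReal.ofReal (|w s| * V s)) * K := ENNReal.tsum_mul_right
    · rw [tsum_eq_zero_of_not_summable hsum]
      simp
  constructor
  · have := key μη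
    have heq : (∑' s, ENNReal.ofReal (|μη s| * V s))
        = ∑' s, ENNReal.ofReal (μη s * V s) :=
      tsum_congr fun s => by rw [abs_of_nonneg (hμη0 s)]
    rw [heq] at this
    exact this
  · exact key (fun s => μθ s - μη s)
end
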